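/- arXiv:2112.07705 — 2 statements merged into one kernel-verified Lean document; each statement's English description precedes it below -/
import Mathlib

section
/- Along integral curves of the Hamilton vector field H_p of p(t, r, λ, ξ) = (α²/r² − 1)λ² + ξ² lying in the zero set of p with λ ≠ 0 and r > 0, one has r(s)² = α² + (2λ s + c)² for some constant c; in particular r(s) → ∞ monotonically (after the minimum) as s → ±∞, and r(s) ≥ α for all s. -/
/-- Along null bicharacteristics of `p = (α²/r² − 1)λ² + ξ²` (integral curves of the
Hamilton vector field `H_p = −2λ(1−α²/r²)∂_t + 2ξ∂_r + (2α²λ²/r³)∂_ξ` lying in `{p = 0}`)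
with `λ ≠ 0` and `r > 0`, one has `r(s)² = α² + (2λs + c)²` for some constant `c`;
in particular `r ≥ α` everywhere and `r → ∞` in both directions. -/
theorem bicharacteristic_radius (α lam : ℝ) (hα : 0 < α) (hlam : lam ≠ 0)
    (t r ξ : ℝ → ℝ) (hrpos : ∀ s, 0 < r s)
    (ht : ∀ s, HasDerivAt t (-2 * lam * (1 - α ^ 2 / (r s) ^ 2)) s)
    (hr : ∀ s, HasDerivAt r (2 * ξ s) s)
    (hξ : ∀ s, HasDerivAt ξ (2 * α ^ 2 * lam ^ 2 / (r s) ^ 3) s)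
    (hchar : ∀ s, (α ^ 2 / (r s) ^ 2 - 1) * lam ^ 2 + (ξ s) ^ 2 = 0) :
    ∃ c : ℝ, (∀ s, (r s) ^ 2 = α ^ 2 + (2 * lam * s + c) ^ 2) ∧
      (∀ s, α ≤ r s) ∧
      Filter.Tendsto r Filter.atTop Filter.atTop ∧
      Filter.Tendsto r Filter.atBot Filter.atTop := by
  classical
  set c : ℝ := r 0 * ξ 0 / lam with hc
  have hrne : ∀ s, r s ≠ 0 := fun s => (hrpos s).ne'
  -- the function h s = r s * ξ s - lam * (2*lam*s + c) has derivative 0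
  have hh : ∀ s, HasDerivAt (fun s => r s * ξ s - lam * (2 * lam * s + c)) 0 s := by
    intro s
    have h1 := (hr s).fun_mul (hξ s)
    have h2 : HasDerivAt (fun s : ℝ => lam * (2 * lam * s + c)) (lam * (2 * lam)) s := by
      have haff : HasDerivAt (fun s : ℝ => 2 * lam * s + c) (2 * lam) s := by
        simpa using ((hasDerivAt_id s).const_mul (2 * lam)).add_const c
      simpa using haff.const_mul lam
    have h3 := h1.fun_sub h2
    refine h3.congr_deriv ?_
    have hcs := hchar s
    have hne := hrne s
    field_simp at hcs ⊢
    linear_combination 2 * hcs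
  have hconst : ∀ s, r s * ξ s - lam * (2 * lam * s + c) = r 0 * ξ 0 - lam * (2 * lam * 0 + c) :=
    fun s => is_const_of_deriv_eq_zero (fun x => (hh x).differentiableAt)
      (fun x => (hh x).deriv) s 0
  have hzero : ∀ s, r s * ξ s = lam * (2 * lam * s + c) := by
    intro s
    have := hconst s
    have hc0 : lam * c = r 0 * ξ 0 := by
      rw [hc]; field_simp
    nlinarith [this]
  -- now g s = r s ^ 2 - (2*lam*s+c)^2 has derivative 0
  have hg : ∀ s, HasDerivAt (fun s => (r s) ^ 2 - (2 * lam * s + c) ^ 2) 0 s := by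
    intro s
    have h1 : HasDerivAt (fun s => (r s) ^ 2) (2 * r s * (2 * ξ s)) s := by
      simpa using ((hr s).fun_pow 2)
    have h2 : HasDerivAt (fun s : ℝ => (2 * lam * s + c) ^ 2)
        (2 * (2 * lam * s + c) * (2 * lam)) s := by
      have haff : HasDerivAt (fun s : ℝ => 2 * lam * s + c) (2 * lam) s := by
        simpa using ((hasDerivAt_id s).const_mul (2 * lam)).add_const c
      simpa using haff.fun_pow 2
    have h3 := h1.fun_sub h2
    refine h3.congr_deriv ?_
    have := hzero s
    nlinarith [this]
  have hgconst : ∀ s, (r s) ^ 2 - (2 * lam * s + c) ^ 2 = (r 0) ^ 2 - (2 * lam * 0 + c) ^ 2 :=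
    fun s => is_const_of_deriv_eq_zero (fun x => (hg x).differentiableAt)
      (fun x => (hg x).deriv) s 0
  have key : ∀ s, (r s) ^ 2 = α ^ 2 + (2 * lam * s + c) ^ 2 := by
    intro s
    have h0 := hgconst s
    have hcs := hchar 0
    have hne := hrne 0
    have hc2 : c ^ 2 = (r 0) ^ 2 - α ^ 2 := by
      rw [hc]
      field_simp at hcs ⊢
      nlinarith [hcs]
    nlinarith [h0, hc2]
  have hge : ∀ s, α ≤ r s := by
    intro s
    nlinarith [key s, hrpos s, sq_nonneg (2 * lam * s + c), hα]
  have hbound : ∀ s, |2 * lam * s + c| ≤ r s := by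
    intro s
    rw [abs_le]
    constructor <;> nlinarith [key s, hrpos s, sq_nonneg α]
  refine ⟨c, key, hge, ?_, ?_⟩
  · apply Filter.tendsto_atTop_mono hbound
    rcases lt_or_gt_of_ne hlam with h | h
    · have l1 : Filter.Tendsto (fun s : ℝ => 2 * lam * s + c) Filter.atTop Filter.atBot := by
        apply Filter.tendsto_atBot_add_const_right
        exact Filter.Tendsto.const_mul_atTop_of_neg (by linarith) Filter.tendsto_id
      exact Filter.tendsto_abs_atBot_atTop.comp l1
    · have l1 : Filter.Tendsto (fun s : ℝ => 2 * lam * s + c) Filter.atTop Filter.atTop := by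
        apply Filter.tendsto_atTop_add_const_right
        exact Filter.Tendsto.const_mul_atTop (by linarith) Filter.tendsto_id
      exact Filter.tendsto_abs_atTop_atTop.comp l1
  · apply Filter.tendsto_atTop_mono hbound
    rcases lt_or_gt_of_ne hlam with h | h
    · have l1 : Filter.Tendsto (fun s : ℝ => 2 * lam * s + c) Filter.atBot Filter.atTop := by
        apply Filter.tendsto_atTop_add_const_right
        exact Filter.Tendsto.const_mul_atBot_of_neg (by linarith) Filter.tendsto_id
      exact Filter.tendsto_abs_atTop_atTop.comp l1
    · have l1 : Filter.Tendsto (fun s : ℝ => 2 * lam * s + c) Filter.atBot Filter.atBot := by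
        apply Filter.tendsto_atBot_add_const_right
        exact Filter.Tendsto.const_mul_atBot (by linarith) Filter.tendsto_id
      exact Filter.tendsto_abs_atBot_atTop.comp l1
end

section
/- Forward escape of bicharacteristics: let γ(s) = (t(s), r(s), λ, ξ(s)) be a maximal integral curve of H_p = −2λ(1 − α²/r²)∂_t + 2ξ∂_r + (2α²λ²/r³)∂_ξ in {r > 0} with p = 0 and λ ≠ 0. Then exactly one of the two time directions ±s has t(s) → −∞ and r(s) → +∞ as s → ±∞; that is, every null bicharacteristic escapes to arbitrarily large r in backward time t. -/
open Filter Set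

/-- Auxiliary lemma: the case `lam > 0`. -/
lemma escape_aux (α lam : ℝ) (hα : 0 < α) (hlam : 0 < lam)
    (t r ξ : ℝ → ℝ) (hrpos : ∀ s, 0 < r s)
    (ht : ∀ s, HasDerivAt t (-2 * lam * (1 - α ^ 2 / (r s) ^ 2)) s)
    (hr : ∀ s, HasDerivAt r (2 * ξ s) s)
    (hξ : ∀ s, HasDerivAt ξ (2 * α ^ 2 * lam ^ 2 / (r s) ^ 3) s)
    (hchar : ∀ s, (α ^ 2 / (r s) ^ 2 - 1) * lam ^ 2 + (ξ s) ^ 2 = 0) :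
    (Filter.Tendsto t Filter.atTop Filter.atBot ∧
      Filter.Tendsto r Filter.atTop Filter.atTop) ∧
    (Filter.Tendsto t Filter.atBot Filter.atTop ∧
      Filter.Tendsto r Filter.atBot Filter.atTop) := by
  have hlamne : lam ≠ 0 := ne_of_gt hlam
  have hrne : ∀ s, r s ≠ 0 := fun s => (hrpos s).ne'
  set a : ℝ := 4 * r 0 * ξ 0 with ha
  -- derivative of 4 r ξ - 8 λ² s is zero
  have hg1 : ∀ s, HasDerivAt (fun s => 4 * r s * ξ s - 8 * lam ^ 2 * s) 0 s := by
    intro s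
    have h1 : HasDerivAt (fun s => 4 * r s) (4 * (2 * ξ s)) s := (hr s).const_mul 4
    have h2 := h1.fun_mul (hξ s)
    have h3 : HasDerivAt (fun s : ℝ => 8 * lam ^ 2 * s) (8 * lam ^ 2) s := by
      simpa using (hasDerivAt_id s).const_mul (8 * lam ^ 2)
    have h4 := h2.fun_sub h3
    refine h4.congr_deriv (Eq.symm ?_)
    have hc := hchar s
    have hz := hrne s
    field_simp at hc ⊢
    nlinarith [hc, hrpos s]
  have hc1 : ∀ s, 4 * r s * ξ s - 8 * lam ^ 2 * s = a := by
    intro s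
    have := is_const_of_deriv_eq_zero
      (f := fun s => 4 * r s * ξ s - 8 * lam ^ 2 * s)
      (fun x => (hg1 x).differentiableAt) (fun x => (hg1 x).deriv) s 0
    simpa [ha] using this
  -- derivative of r² - (4 λ² s² + a s) is zero
  have hg2 : ∀ s, HasDerivAt (fun s => r s ^ 2 - (4 * lam ^ 2 * s ^ 2 + a * s)) 0 s := by
    intro s
    have h4 : HasDerivAt (fun s => r s ^ 2) (2 * r s * (2 * ξ s)) s := by
      simpa using (hr s).fun_pow 2
    have h5 : HasDerivAt (fun s : ℝ => 4 * lam ^ 2 * s ^ 2 + a * s)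
        (8 * lam ^ 2 * s + a) s := by
      have p1 : HasDerivAt (fun s : ℝ => 4 * lam ^ 2 * s ^ 2) (4 * lam ^ 2 * (2 * s)) s := by
        simpa using (hasDerivAt_pow 2 s).const_mul (4 * lam ^ 2)
      have p2 : HasDerivAt (fun s : ℝ => a * s) a s := by
        simpa using (hasDerivAt_id s).const_mul a
      refine (p1.fun_add p2).congr_deriv (Eq.symm ?_)
      ring
    have h6 := h4.fun_sub h5
    refine h6.congr_deriv (Eq.symm ?_)
    linear_combination (-1 : ℝ) * hc1 s
  have hq : ∀ s, r s ^ 2 = 4 * lam ^ 2 * s ^ 2 + a * s + r 0 ^ 2 := by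
    intro s
    have h := is_const_of_deriv_eq_zero
      (f := fun s => r s ^ 2 - (4 * lam ^ 2 * s ^ 2 + a * s))
      (fun x => (hg2 x).differentiableAt) (fun x => (hg2 x).deriv) s 0
    norm_num at h
    linarith
  set c : ℝ := a / (8 * lam ^ 2) with hcdef
  have hc8 : 8 * lam ^ 2 * c = a := by
    rw [hcdef]; field_simp
  have hq2 : ∀ s, (2 * lam * (s + c)) ^ 2 ≤ r s ^ 2 := by
    intro s
    have key : (2 * lam * (s + c)) ^ 2 + r (-c) ^ 2 = r s ^ 2 := by
      rw [hq s, hq (-c)]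
      linear_combination (s + c) * hc8
    nlinarith [sq_nonneg (r (-c))]
  have hb : ∀ s, |2 * lam * (s + c)| ≤ r s := by
    intro s
    have h := Real.sqrt_le_sqrt (hq2 s)
    rwa [Real.sqrt_sq_eq_abs, Real.sqrt_sq (hrpos s).le] at h
  have hmul : (0 : ℝ) < 2 * |lam| := by positivity
  -- r → ∞ in both directions
  have hrtop : Tendsto r atTop atTop := by
    apply tendsto_atTop_mono' atTop ?_
      ((tendsto_atTop_add_const_right atTop c tendsto_id).const_mul_atTop hmul)
    filter_upwards [eventually_ge_atTop (-c)] with s hs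
    have h := hb s
    have he : |2 * lam * (s + c)| = 2 * |lam| * (s + c) := by
      rw [abs_mul, abs_mul, abs_of_nonneg (show (0:ℝ) ≤ s + c by linarith), abs_two]
    simp only [id_eq]
    linarith [he ▸ h]
  have hrbot : Tendsto r atBot atTop := by
    have hcomp : Tendsto (fun s : ℝ => 2 * |lam| * (-(s + c))) atBot atTop := by
      apply Tendsto.const_mul_atTop hmul
      exact tendsto_neg_atBot_atTop.comp (tendsto_atBot_add_const_right atBot c tendsto_id)
    apply tendsto_atTop_mono' atBot ?_ hcomp
    filter_upwards [eventually_le_atBot (-c)] with s hs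
    have h := hb s
    have he : |2 * lam * (s + c)| = 2 * |lam| * (-(s + c)) := by
      rw [abs_mul, abs_mul, abs_of_nonpos (show s + c ≤ 0 by linarith), abs_two]
    linarith [he ▸ h]
  -- the auxiliary function t + λ s
  have hdt : ∀ s, HasDerivAt (fun s => t s + lam * s)
      (-2 * lam * (1 - α ^ 2 / (r s) ^ 2) + lam) s := by
    intro s
    exact (ht s).add (by simpa using (hasDerivAt_id s).const_mul lam)
  have hdiff : Differentiable ℝ (fun s => t s + lam * s) :=
    fun s => (hdt s).differentiableAt
  have hderiv_le : ∀ s, 2 * α ≤ r s → deriv (fun s => t s + lam * s) s ≤ 0 := by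
    intro s hs
    rw [(hdt s).deriv]
    have h1 : α ^ 2 / (r s) ^ 2 ≤ 1 / 4 := by
      rw [div_le_iff₀ (pow_pos (hrpos s) 2)]
      nlinarith [hα]
    nlinarith [mul_nonneg hlam.le (show (0:ℝ) ≤ 1 / 4 - α ^ 2 / (r s) ^ 2 by linarith)]
  have hantiIci : ∀ S : ℝ, (∀ s, S ≤ s → 2 * α ≤ r s) →
      AntitoneOn (fun s => t s + lam * s) (Ici S) := by
    intro S hS
    apply antitoneOn_of_deriv_nonpos (convex_Ici S) hdiff.continuous.continuousOn
      hdiff.differentiableOn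
    intro x hx
    rw [interior_Ici] at hx
    exact hderiv_le x (hS x (le_of_lt hx))
  have hantiIic : ∀ S : ℝ, (∀ s, s ≤ S → 2 * α ≤ r s) →
      AntitoneOn (fun s => t s + lam * s) (Iic S) := by
    intro S hS
    apply antitoneOn_of_deriv_nonpos (convex_Iic S) hdiff.continuous.continuousOn
      hdiff.differentiableOn
    intro x hx
    rw [interior_Iic] at hx
    exact hderiv_le x (hS x (le_of_lt hx))
  -- t → -∞ forward
  have httop : Tendsto t atTop atBot := by
    have hev := hrtop.eventually (eventually_ge_atTop (2 * α))
    rw [eventually_atTop] at hev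
    obtain ⟨S, hS⟩ := hev
    have hA := hantiIci S hS
    have h1 : Tendsto (fun s : ℝ => lam * s) atTop atTop :=
      tendsto_id.const_mul_atTop hlam
    have hcomp : Tendsto (fun s : ℝ => t S + lam * S - lam * s) atTop atBot := by
      have h2 : Tendsto (fun s : ℝ => -(lam * s)) atTop atBot :=
        tendsto_neg_atTop_atBot.comp h1
      simpa [sub_eq_add_neg] using
        tendsto_atBot_add_const_left atTop (t S + lam * S) h2
    apply tendsto_atBot_mono' atTop ?_ hcomp
    filter_upwards [eventually_ge_atTop S] with s hs
    have := hA self_mem_Ici (show s ∈ Ici S from hs) hs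
    simp only at this
    linarith
  -- t → +∞ backward
  have htbot : Tendsto t atBot atTop := by
    have hev := hrbot.eventually (eventually_ge_atTop (2 * α))
    rw [eventually_atBot] at hev
    obtain ⟨S, hS⟩ := hev
    have hA := hantiIic S hS
    have h1 : Tendsto (fun s : ℝ => lam * s) atBot atBot :=
      tendsto_id.const_mul_atBot hlam
    have hcomp : Tendsto (fun s : ℝ => t S + lam * S - lam * s) atBot atTop := by
      have h2 : Tendsto (fun s : ℝ => -(lam * s)) atBot atTop :=
        tendsto_neg_atBot_atTop.comp h1
      simpa [sub_eq_add_neg] using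
        tendsto_atTop_add_const_left atBot (t S + lam * S) h2
    apply tendsto_atTop_mono' atBot ?_ hcomp
    filter_upwards [eventually_le_atBot S] with s hs
    have := hA (show s ∈ Iic S from hs) self_mem_Iic hs
    simp only at this
    linarith
  exact ⟨⟨httop, hrtop⟩, htbot, hrbot⟩

/-- Forward escape of bicharacteristics: along a maximal null bicharacteristic of
`p = (α²/r² − 1)λ² + ξ²` with `λ ≠ 0` and `r > 0`, exactly one of the two time directions
`s → ±∞` has `t(s) → −∞` and `r(s) → +∞`: every null bicharacteristic escapes to
arbitrarily large `r` in backward time `t`. -/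
theorem forward_escape (α lam : ℝ) (hα : 0 < α) (hlam : lam ≠ 0)
    (t r ξ : ℝ → ℝ) (hrpos : ∀ s, 0 < r s)
    (ht : ∀ s, HasDerivAt t (-2 * lam * (1 - α ^ 2 / (r s) ^ 2)) s)
    (hr : ∀ s, HasDerivAt r (2 * ξ s) s)
    (hξ : ∀ s, HasDerivAt ξ (2 * α ^ 2 * lam ^ 2 / (r s) ^ 3) s)
    (hchar : ∀ s, (α ^ 2 / (r s) ^ 2 - 1) * lam ^ 2 + (ξ s) ^ 2 = 0) :
    Xor' (Filter.Tendsto t Filter.atTop Filter.atBot ∧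
          Filter.Tendsto r Filter.atTop Filter.atTop)
         (Filter.Tendsto t Filter.atBot Filter.atBot ∧
          Filter.Tendsto r Filter.atBot Filter.atTop) := by
  rcases lt_or_gt_of_ne hlam with hneg | hpos
  · -- lam < 0 : reverse time
    have ht' : ∀ s, HasDerivAt (fun s => t (-s))
        (-2 * (-lam) * (1 - α ^ 2 / (r (-s)) ^ 2)) s := by
      intro s
      have h : HasDerivAt (fun s => t (-s))
          ((-2 * lam * (1 - α ^ 2 / (r (-s)) ^ 2)) * (-1)) s :=
        HasDerivAt.comp s (ht (-s)) (hasDerivAt_neg s)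
      convert h using 1
      ring
    have hr' : ∀ s, HasDerivAt (fun s => r (-s)) (2 * (-ξ (-s))) s := by
      intro s
      have h : HasDerivAt (fun s => r (-s)) ((2 * ξ (-s)) * (-1)) s :=
        HasDerivAt.comp s (hr (-s)) (hasDerivAt_neg s)
      convert h using 1
      ring
    have hξ' : ∀ s, HasDerivAt (fun s => -ξ (-s))
        (2 * α ^ 2 * (-lam) ^ 2 / (r (-s)) ^ 3) s := by
      intro s
      have h : HasDerivAt (fun s => ξ (-s))
          ((2 * α ^ 2 * lam ^ 2 / (r (-s)) ^ 3) * (-1)) s :=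
        HasDerivAt.comp s (hξ (-s)) (hasDerivAt_neg s)
      refine h.fun_neg.congr_deriv (Eq.symm ?_)
      ring
    have hchar' : ∀ s, (α ^ 2 / (r (-s)) ^ 2 - 1) * (-lam) ^ 2 + (-ξ (-s)) ^ 2 = 0 := by
      intro s
      linear_combination hchar (-s)
    obtain ⟨⟨h1, h2⟩, h3, h4⟩ := escape_aux α (-lam) hα (by linarith)
      (fun s => t (-s)) (fun s => r (-s)) (fun s => -ξ (-s))
      (fun s => hrpos (-s)) ht' hr' hξ' hchar'
    right
    constructor
    · exact ⟨by simpa only [Function.comp_def, neg_neg] using h1.comp tendsto_neg_atBot_atTop,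
        by simpa only [Function.comp_def, neg_neg] using h2.comp tendsto_neg_atBot_atTop⟩
    · rintro ⟨hcon, -⟩
      have h5 : Filter.Tendsto t Filter.atTop Filter.atTop := by
        simpa only [Function.comp_def, neg_neg] using h3.comp tendsto_neg_atTop_atBot
      exact (h5.not_tendsto disjoint_atTop_atBot) hcon
  · obtain ⟨⟨h1, h2⟩, h3, h4⟩ :=
      escape_aux α lam hα hpos t r ξ hrpos ht hr hξ hchar
    left
    exact ⟨⟨h1, h2⟩, fun h => (h3.not_tendsto disjoint_atTop_atBot) h.1⟩
end
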